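/- For all x in [0,1], arcsin(x) ≤ π(√2 + 1/2)(sqrt(1+x) - sqrt(1-x))/(4 + sqrt(1+x) + sqrt(1-x)). -/

import Mathlib

open Real

noncomputable def Cz : ℝ := Real.pi * (Real.sqrt 2 + 1 / 2)

lemma Cz_ge_six : 6 ≤ Cz := by
  have hpi := Real.pi_gt_d6
  have hs : (1.414:ℝ) ≤ Real.sqrt 2 := by
    nlinarith [Real.sq_sqrt (by norm_num : (0:ℝ) ≤ 2), Real.sqrt_nonneg 2]
  unfold Cz
  nlinarith [Real.pi_pos]

lemma key : ∀ t ∈ Set.Icc (0:ℝ) (π/4), 2*t*(2+Real.cos t) ≤ Cz * Real.sin t := by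
  have hC := Cz_ge_six
  set f : ℝ → ℝ := fun t => Cz * Real.sin t - 2*t*(2+Real.cos t) with hf
  set f' : ℝ → ℝ := fun t => Cz * Real.cos t - (2*(2+Real.cos t) + 2*t*(-Real.sin t)) with hf'
  set f'' : ℝ → ℝ := fun t => (4 - Cz) * Real.sin t + 2*t*Real.cos t with hf''
  have hd1 : ∀ t : ℝ, HasDerivAt f (f' t) t := by
    intro t
    have h1 : HasDerivAt (fun t : ℝ => Cz * Real.sin t) (Cz * Real.cos t) t :=
      (Real.hasDerivAt_sin t).const_mul Cz
    have h2 : HasDerivAt (fun t : ℝ => 2*t*(2+Real.cos t))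
        (2*(2+Real.cos t) + (2*t)*(-Real.sin t)) t := by
      have := ((hasDerivAt_id t).const_mul (2:ℝ)).mul
        ((hasDerivAt_const t (2:ℝ)).add (Real.hasDerivAt_cos t))
      refine this.congr_deriv ?_
      simp [id_eq]
    have := h1.sub h2
    exact this
  have hd2 : ∀ t : ℝ, HasDerivAt f' (f'' t) t := by
    intro t
    have h1 : HasDerivAt (fun t : ℝ => Cz * Real.cos t) (Cz * (-Real.sin t)) t :=
      (Real.hasDerivAt_cos t).const_mul Cz
    have h2 : HasDerivAt (fun t : ℝ => 2*(2+Real.cos t) + 2*t*(-Real.sin t))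
        (2*(-Real.sin t) + (2*(-Real.sin t) + (2*t)*(-Real.cos t))) t := by
      have ha : HasDerivAt (fun t : ℝ => 2*(2+Real.cos t)) (2*(-Real.sin t)) t := by
        have := ((hasDerivAt_const t (2:ℝ)).add (Real.hasDerivAt_cos t)).const_mul (2:ℝ)
        refine this.congr_deriv ?_
        ring
      have hb : HasDerivAt (fun t : ℝ => 2*t*(-Real.sin t))
          (2*(-Real.sin t) + (2*t)*(-Real.cos t)) t := by
        have := ((hasDerivAt_id t).const_mul (2:ℝ)).mul (Real.hasDerivAt_sin t).neg
        refine this.congr_deriv ?_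
        simp [id_eq]
      exact ha.add hb
    have := h1.sub h2
    refine this.congr_deriv ?_
    simp only [hf', hf'']
    ring
  have hconc : ConcaveOn ℝ (Set.Icc (0:ℝ) (π/4)) f := by
    apply concaveOn_of_hasDerivWithinAt2_nonpos (f' := f') (f'' := f'') (convex_Icc _ _)
    · exact (Continuous.continuousOn (by fun_prop))
    · intro t ht; exact (hd1 t).hasDerivWithinAt
    · intro t ht; exact (hd2 t).hasDerivWithinAt
    · intro t ht
      rw [interior_Icc] at ht
      obtain ⟨ht0, ht1⟩ := ht
      have hsin : 0 < Real.sin t := Real.sin_pos_of_pos_of_lt_pi ht0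
        (by linarith [Real.pi_pos])
      have hcos : 0 < Real.cos t := Real.cos_pos_of_mem_Ioo
        ⟨by linarith [Real.pi_pos], by linarith [Real.pi_pos]⟩
      have htan : t < Real.tan t := Real.lt_tan ht0 (by linarith [Real.pi_pos])
      have h1 : t * Real.cos t < Real.sin t := by
        rw [Real.tan_eq_sin_div_cos, lt_div_iff₀ hcos] at htan
        linarith
      simp only [hf'']
      nlinarith
  intro t ht
  have h0 : f 0 = 0 := by simp [hf]
  have h4 : f (π/4) = 0 := by
    simp only [hf, Real.sin_pi_div_four, Real.cos_pi_div_four]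
    have h2 : Real.sqrt 2 * Real.sqrt 2 = 2 := Real.mul_self_sqrt (by norm_num)
    unfold Cz
    nlinarith [Real.pi_pos]
  have hpi := Real.pi_pos
  obtain ⟨ht0, ht1⟩ := ht
  have hb : (4*t/π) ∈ Set.Icc (0:ℝ) 1 := by
    constructor
    · positivity
    · rw [div_le_one hpi]; linarith
  have := hconc.2 (Set.left_mem_Icc.2 (by positivity)) (Set.right_mem_Icc.2 (by positivity))
    (by linarith [hb.2] : (0:ℝ) ≤ 1 - 4*t/π) hb.1 (by ring)
  rw [smul_eq_mul, smul_eq_mul, smul_eq_mul, smul_eq_mul] at this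
  have ht' : (1 - 4*t/π) * 0 + (4*t/π) * (π/4) = t := by field_simp; ring
  rw [ht', h0, h4] at this
  simp only [hf] at this
  linarith [this]

theorem stmt_6 : ∀ x ∈ Set.Icc (0:ℝ) 1,
    Real.arcsin x ≤
      Real.pi * (Real.sqrt 2 + 1 / 2) * (Real.sqrt (1 + x) - Real.sqrt (1 - x)) /
        (4 + Real.sqrt (1 + x) + Real.sqrt (1 - x)) := by
  intro x hx
  obtain ⟨hx0, hx1⟩ := hx
  have hpi := Real.pi_pos
  set t := Real.arcsin x / 2 with hts
  have ha0 : 0 ≤ Real.arcsin x := Real.arcsin_nonneg.2 hx0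
  have ha1 : Real.arcsin x ≤ π/2 := Real.arcsin_le_pi_div_two x
  have ht0 : 0 ≤ t := by positivity
  have ht1 : t ≤ π/4 := by rw [hts]; linarith
  have hsin : Real.sin (Real.arcsin x) = x := Real.sin_arcsin (by linarith) hx1
  have h2t : Real.arcsin x = 2 * t := by rw [hts]; ring
  have hx2 : 2 * Real.sin t * Real.cos t = x := by
    rw [← Real.sin_two_mul, ← h2t, hsin]
  have hsq := Real.sin_sq_add_cos_sq t
  have hsinn : 0 ≤ Real.sin t := Real.sin_nonneg_of_nonneg_of_le_pi ht0 (by linarith)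
  have hcosn : 0 ≤ Real.cos t := Real.cos_nonneg_of_mem_Icc ⟨by linarith, by linarith⟩
  have hsc : Real.sin t ≤ Real.cos t := by
    rw [← Real.cos_pi_div_two_sub t]
    exact Real.cos_le_cos_of_nonneg_of_le_pi ht0 (by linarith) (by linarith)
  have hp : Real.sqrt (1 + x) = Real.cos t + Real.sin t := by
    rw [show 1 + x = (Real.cos t + Real.sin t)^2 by nlinarith]
    exact Real.sqrt_sq (by linarith)
  have hm : Real.sqrt (1 - x) = Real.cos t - Real.sin t := by
    rw [show 1 - x = (Real.cos t - Real.sin t)^2 by nlinarith]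
    exact Real.sqrt_sq (by linarith)
  rw [hp, hm, h2t]
  have hkey := key t ⟨ht0, ht1⟩
  rw [show (4 + (Real.cos t + Real.sin t) + (Real.cos t - Real.sin t)) = 4 + 2*Real.cos t by ring]
  rw [le_div_iff₀ (by linarith)]
  unfold Cz at hkey
  rw [show Real.pi * (Real.sqrt 2 + 1 / 2) * ((Real.cos t + Real.sin t) - (Real.cos t - Real.sin t))
      = 2 * (Real.pi * (Real.sqrt 2 + 1/2) * Real.sin t) by ring]
  nlinarith [hkey]
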